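/- With K, s₀ and J = {f ∈ C(K) : f vanishes on some neighbourhood of s₀} as above, the quotient vector lattice Z = C(K)/J is not Archimedean: there is z ∈ Z⁺ \ {0} with n·z ≤ Q(1) for all n ∈ ℕ, where Q : C(K) → Z is the quotient map and 1 the constant function one. -/

import Mathlib

/-- the quotient `Z = C(K)/J` of `C(K)` by the order ideal
`J = {f : f vanishes near s₀}` is not Archimedean: there is `z ∈ Z⁺ \ {0}`
with `n • z ≤ Q 1` for all `n`.  We express this via representatives: in the
quotient vector lattice, `Q f ≤ Q g ↔ (f - g) ⊔ 0 ∈ J`, `Q h ≥ 0` iff `h` may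
be chosen with `h ≥ 0`, and `Q h ≠ 0 ↔ h ∉ J`.  Hence the claim reads: there
is `h ∈ C(K)` with `0 ≤ h`, `h ∉ J`, and `(n • h - 1) ⊔ 0 ∈ J` for all `n`. -/
theorem stmt17 {K : Type*} [TopologicalSpace K] [CompactSpace K] [T2Space K]
    (s₀ : K) (S : Set K) (hS : S.Countable) (hSinf : S.Infinite)
    (hacc : AccPt s₀ (Filter.principal S))
    (J : Set C(K, ℝ))
    (hJ : J = {f : C(K, ℝ) | ∃ U ∈ nhds s₀, ∀ t ∈ U, f t = 0}) :
    ∃ h : C(K, ℝ), 0 ≤ h ∧ h ∉ J ∧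
      ∀ n : ℕ, ((n • h - 1) ⊔ 0 : C(K, ℝ)) ∈ J := by
  subst hJ
  -- enumerate `S \ {s₀}`
  have hne : (S \ {s₀}).Nonempty := (hSinf.diff (Set.finite_singleton s₀)).nonempty
  obtain ⟨e, he⟩ := (hS.mono Set.diff_subset).exists_eq_range hne
  -- Urysohn functions
  have hreg : ∀ m : ℕ, ∃ g : C(K, ℝ), g s₀ = 0 ∧ g (e m) = 1 ∧
      ∀ x, g x ∈ Set.Icc (0:ℝ) 1 := by
    intro m
    have hmem : e m ∈ S \ {s₀} := he ▸ Set.mem_range_self m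
    have hd : Disjoint ({s₀} : Set K) {e m} := by
      simp only [Set.disjoint_singleton]
      exact fun hcon => hmem.2 (by simp [hcon])
    obtain ⟨g, h0, h1, hrange⟩ :=
      exists_continuous_zero_one_of_isClosed isClosed_singleton isClosed_singleton hd
    exact ⟨g, h0 rfl, h1 rfl, hrange⟩
  choose g hg0 hg1 hgIcc using hreg
  have hgnorm : ∀ m, ‖g m‖ ≤ 1 := by
    intro m
    refine (ContinuousMap.norm_le _ zero_le_one).mpr fun x => ?_
    rw [Real.norm_eq_abs, abs_le]
    exact ⟨by linarith [(hgIcc m x).1], (hgIcc m x).2⟩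
  have hgeo : Summable (fun m : ℕ => (2⁻¹:ℝ)^(m+1)) := by
    have := (summable_geometric_of_lt_one (r := (2⁻¹:ℝ)) (by norm_num) (by norm_num)).mul_left 2⁻¹
    exact this.congr (fun m => by rw [pow_succ]; ring)
  have hbd : ∀ m : ℕ, ‖(2⁻¹:ℝ)^(m+1) • g m‖ ≤ (2⁻¹:ℝ)^(m+1) := by
    intro m
    refine (norm_smul_le ((2⁻¹:ℝ)^(m+1)) (g m)).trans ?_
    calc ‖(2⁻¹:ℝ)^(m+1)‖ * ‖g m‖ ≤ ‖(2⁻¹:ℝ)^(m+1)‖ * 1 :=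
          mul_le_mul_of_nonneg_left (hgnorm m) (norm_nonneg _)
      _ = (2⁻¹:ℝ)^(m+1) := by
          rw [mul_one, Real.norm_eq_abs, abs_of_nonneg (by positivity)]
  have hsum : Summable (fun m : ℕ => (2⁻¹:ℝ)^(m+1) • g m) :=
    Summable.of_norm_bounded hgeo hbd
  set h : C(K, ℝ) := ∑' m : ℕ, (2⁻¹:ℝ)^(m+1) • g m with hh
  have happ : ∀ t : K, h t = ∑' m : ℕ, (2⁻¹:ℝ)^(m+1) * g m t := by
    intro t
    exact (ContinuousMap.evalCLM ℝ t).map_tsum hsum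
  have hpsum : ∀ t : K, Summable (fun m : ℕ => (2⁻¹:ℝ)^(m+1) * g m t) := by
    intro t
    exact hsum.mapL (ContinuousMap.evalCLM ℝ t)
  have htermnn : ∀ (t : K) (m : ℕ), (0:ℝ) ≤ (2⁻¹:ℝ)^(m+1) * g m t := fun t m =>
    mul_nonneg (by positivity) (hgIcc m t).1
  have hnn : ∀ t : K, 0 ≤ h t := by
    intro t
    rw [happ t]
    exact tsum_nonneg (htermnn t)
  have hs0 : h s₀ = 0 := by
    rw [happ s₀]
    simp [hg0]
  have hpos : ∀ m : ℕ, 0 < h (e m) := by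
    intro m
    rw [happ (e m)]
    refine Summable.tsum_pos (hpsum (e m)) (htermnn (e m)) m ?_
    rw [hg1 m]
    positivity
  refine ⟨h, ?_, ?_, ?_⟩
  · intro t; simpa using hnn t
  · rintro ⟨U, hU, hUz⟩
    obtain ⟨y, ⟨hyU, hyS⟩, hyne⟩ := (accPt_iff_nhds (x := s₀) (C := S)).mp hacc U hU
    have : y ∈ S \ {s₀} := ⟨hyS, hyne⟩
    rw [he] at this
    obtain ⟨m, rfl⟩ := this
    exact (hpos m).ne' (hUz _ hyU)
  · intro n
    refine ⟨{t | (n:ℝ) * h t < 1}, ?_, ?_⟩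
    · refine (isOpen_lt (continuous_const.mul h.continuous) continuous_const).mem_nhds ?_
      simp [hs0]
    · intro t ht
      simp only [Set.mem_setOf_eq] at ht
      have hnh : (n • h) t = (n : ℝ) * h t := by
        show n • h t = (n : ℝ) * h t
        rw [nsmul_eq_mul]
      simp only [ContinuousMap.sup_apply, ContinuousMap.sub_apply,
        ContinuousMap.one_apply, ContinuousMap.zero_apply, hnh]
      exact max_eq_right (by linarith)
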